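/- With the reduction from correlation clustering to multicut: for every clustering 𝒞 = {C_1,…,C_m} of V there exists a partition 𝒫 of V' separating all source-sink pairs of S_{G'} with max_{P∈𝒫} δ(P) ≤ max_{1≤i≤m} cost(C_i). Consequently, the minimum over all partitions of V' separating all source-sink pairs of the maximum cut weight of a part is at most the minimum over all clusterings of V of the maximum disagreement of a cluster. -/

import Mathlib

open Finset

attribute [local instance] Classical.propDecidable

/-- `δ(S)`: total weight of edges with exactly one endpoint in `S`. -/
noncomputable def cutw {V : Type*} [Fintype V] (w : V → V → ℝ) (S : Finset V) : ℝ :=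
  ∑ u, ∑ v, if u ∈ S ∧ v ∉ S then w u v else 0

/-- Disagreement of a cluster `C`: weight of negative edges inside `C` plus weight of
positive edges with exactly one endpoint in `C`. -/
noncomputable def ccCost {V : Type*} [Fintype V] (w : V → V → ℝ)
    (neg : V → V → Prop) (C : Finset V) : ℝ :=
  (∑ u, ∑ v, if u ≠ v ∧ neg u v ∧ u ∈ C ∧ v ∈ C then w u v else 0) / 2
    + ∑ u, ∑ v, if u ≠ v ∧ ¬ neg u v ∧ u ∈ C ∧ v ∉ C then w u v else 0

/-- The vertex set `V' = V ⊎ {uv : (u,v) ∈ E⁻}` of the multicut instance obtained from a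
correlation clustering instance; `F` is the set of (oriented representatives of the)
negative edges. -/
abbrev RedV (V : Type*) (F : Finset (V × V)) : Type _ := V ⊕ {p : V × V // p ∈ F}

/-- The edge weights of the multicut instance `G'`: every positive edge of `G` keeps its
weight, and for each negative edge `(u,v) ∈ E⁻` the edge `(u, uv)` gets weight `w u v`. -/
noncomputable def redw {V : Type*} (w : V → V → ℝ) (neg : V → V → Prop)
    (F : Finset (V × V)) : RedV V F → RedV V F → ℝ
  | Sum.inl u, Sum.inl v => if u ≠ v ∧ ¬ neg u v then w u v else 0
  | Sum.inl u, Sum.inr e => if u = e.1.1 then w e.1.1 e.1.2 else 0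
  | Sum.inr e, Sum.inl u => if u = e.1.1 then w e.1.1 e.1.2 else 0
  | Sum.inr _, Sum.inr _ => 0

/-- Key counting inequality: the weight of the `F`-representatives of negative edges inside
`C` is at most half the ordered sum of negative weights inside `C`. -/
lemma negsum_le {V : Type} [Fintype V] [DecidableEq V]
    (w : V → V → ℝ) (neg : V → V → Prop)
    (hw : ∀ u v, w u v = w v u) (hw0 : ∀ u v, 0 ≤ w u v)
    (hneg : ∀ u v, neg u v → neg v u)
    (F : Finset (V × V))
    (hF1 : ∀ p ∈ F, p.1 ≠ p.2 ∧ neg p.1 p.2)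
    (hF3 : ∀ p ∈ F, (p.2, p.1) ∉ F) (C : Finset V) :
    ∑ p ∈ F.filter (fun p => p.1 ∈ C ∧ p.2 ∈ C), w p.1 p.2
      ≤ (∑ u, ∑ v, if u ≠ v ∧ neg u v ∧ u ∈ C ∧ v ∈ C then w u v else 0) / 2 := by
  classical
  set F1 := F.filter (fun p => p.1 ∈ C ∧ p.2 ∈ C) with hF1def
  set T := (Finset.univ ×ˢ Finset.univ : Finset (V × V)).filter
      (fun p => p.1 ≠ p.2 ∧ neg p.1 p.2 ∧ p.1 ∈ C ∧ p.2 ∈ C) with hTdef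
  have hT : (∑ u, ∑ v, if u ≠ v ∧ neg u v ∧ u ∈ C ∧ v ∈ C then w u v else 0)
      = ∑ p ∈ T, w p.1 p.2 := by
    rw [hTdef, Finset.sum_filter, Finset.sum_product]
  have hsub : F1 ∪ F1.image Prod.swap ⊆ T := by
    intro p hp
    rcases Finset.mem_union.1 hp with hp | hp
    · rw [hF1def, Finset.mem_filter] at hp
      rw [hTdef, Finset.mem_filter]
      exact ⟨by simp, (hF1 p hp.1).1, (hF1 p hp.1).2, hp.2⟩
    · rcases Finset.mem_image.1 hp with ⟨q, hq, rfl⟩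
      rw [hF1def, Finset.mem_filter] at hq
      rw [hTdef, Finset.mem_filter]
      exact ⟨by simp, Ne.symm (hF1 q hq.1).1, hneg _ _ (hF1 q hq.1).2, hq.2.2, hq.2.1⟩
  have hdis : Disjoint F1 (F1.image Prod.swap) := by
    rw [Finset.disjoint_left]
    intro p hp hp'
    rcases Finset.mem_image.1 hp' with ⟨q, hq, rfl⟩
    rw [hF1def, Finset.mem_filter] at hp hq
    exact hF3 _ hq.1 hp.1
  have hswap : ∑ p ∈ F1.image Prod.swap, w p.1 p.2 = ∑ p ∈ F1, w p.1 p.2 := by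
    rw [Finset.sum_image (by intro a _ b _ h; exact Prod.swap_injective h)]
    exact Finset.sum_congr rfl fun p _ => (hw p.2 p.1).trans rfl
  have hle : ∑ p ∈ F1 ∪ F1.image Prod.swap, w p.1 p.2 ≤ ∑ p ∈ T, w p.1 p.2 :=
    Finset.sum_le_sum_of_subset_of_nonneg hsub (fun p _ _ => hw0 _ _)
  rw [Finset.sum_union hdis, hswap] at hle
  rw [hT]; linarith

/-- Lemma 4: for every clustering `𝒞` of `V` there is a partition `𝒫` of `V'`
separating all source-sink pairs `{(v, uv) : (u,v) ∈ E⁻}` of the reduced multicut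
instance whose maximum cut weight is at most the maximum disagreement of `𝒞`
(phrased via an arbitrary upper bound `M` on the disagreements of the clusters).
Consequently the optimum of min-max multicut on `G'` is at most the optimum of
min-max correlation clustering on `G`. -/
theorem reduction_cut_le_cost
    (V : Type) [Fintype V] [DecidableEq V]
    (w : V → V → ℝ) (neg : V → V → Prop)
    (hw : ∀ u v, w u v = w v u) (hw0 : ∀ u v, 0 ≤ w u v)
    (hneg : ∀ u v, neg u v → neg v u)
    (F : Finset (V × V))
    (hF1 : ∀ p ∈ F, p.1 ≠ p.2 ∧ neg p.1 p.2)
    (hF2 : ∀ u v : V, u ≠ v → neg u v → ((u, v) ∈ F ∨ (v, u) ∈ F))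
    (hF3 : ∀ p ∈ F, (p.2, p.1) ∉ F)
    (CC : Finpartition (Finset.univ : Finset V)) :
    ∃ PP : Finpartition (Finset.univ : Finset (RedV V F)),
      (∀ P ∈ PP.parts, ∀ e : {p : V × V // p ∈ F},
        ¬ (Sum.inl e.1.2 ∈ P ∧ Sum.inr e ∈ P)) ∧
      ∀ M : ℝ, (∀ C ∈ CC.parts, ccCost w neg C ≤ M) →
        ∀ P ∈ PP.parts, cutw (redw w neg F) P ≤ M := by
  classical
  set label : RedV V F → Finset V ⊕ {p : V × V // p ∈ F} := fun a =>
    match a with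
    | Sum.inl v => Sum.inl (CC.part v)
    | Sum.inr e => if e.1.2 ∈ CC.part e.1.1 then Sum.inr e else Sum.inl (CC.part e.1.1)
    with hlabel
  let st : Setoid (RedV V F) :=
    ⟨fun a b => label a = label b, ⟨fun _ => rfl, Eq.symm, Eq.trans⟩⟩
  refine ⟨Finpartition.ofSetoid st, ?_, ?_⟩
  · -- separation
    intro P hP e ⟨h1, h2⟩
    obtain ⟨a, ha⟩ := (Finpartition.ofSetoid st).nonempty_of_mem_parts hP
    have hPa : P = (Finpartition.ofSetoid st).part a :=
      ((Finpartition.ofSetoid st).part_eq_of_mem hP ha).symm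
    rw [hPa, Finpartition.mem_part_ofSetoid_iff_rel] at h1 h2
    have h12 : label (Sum.inl e.1.2) = label (Sum.inr e) := h1.symm.trans h2
    simp only [hlabel] at h12
    by_cases hc : e.1.2 ∈ CC.part e.1.1
    · rw [if_pos hc] at h12; exact (Sum.inl_ne_inr h12)
    · rw [if_neg hc] at h12
      have : CC.part e.1.2 = CC.part e.1.1 := Sum.inl.inj h12
      exact hc (this ▸ CC.mem_part (mem_univ e.1.2))
  · -- cut bound
    intro M hM P hP
    have hcc : ∀ D : Finset V, ccCost w neg D
        = (∑ u, ∑ v, if u ≠ v ∧ neg u v ∧ u ∈ D ∧ v ∈ D then w u v else 0) / 2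
          + ∑ u, ∑ v, if u ≠ v ∧ ¬ neg u v ∧ u ∈ D ∧ v ∉ D then w u v else 0 := by
      intro D
      rw [ccCost]
      congr!
    have hcut : cutw (redw w neg F) P
        = ∑ x : RedV V F, ∑ b : RedV V F, if x ∈ P ∧ b ∉ P then redw w neg F x b else 0 := by
      rw [cutw]
      congr!
    obtain ⟨a, ha⟩ := (Finpartition.ofSetoid st).nonempty_of_mem_parts hP
    have hPa : ∀ b, b ∈ P ↔ label a = label b := by
      intro b
      have : P = (Finpartition.ofSetoid st).part a :=
        ((Finpartition.ofSetoid st).part_eq_of_mem hP ha).symm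
      rw [this, Finpartition.mem_part_ofSetoid_iff_rel]; rfl
    have wle : ∀ e : {p : V × V // p ∈ F}, e.1.2 ∈ CC.part e.1.1 →
        w e.1.1 e.1.2 ≤ M := by
      intro e hc
      set C := CC.part e.1.1 with hCdef
      have hCp : C ∈ CC.parts := CC.part_mem.2 (mem_univ _)
      have h1 : e.1 ∈ F.filter (fun p => p.1 ∈ C ∧ p.2 ∈ C) :=
        Finset.mem_filter.2 ⟨e.2, CC.mem_part (mem_univ _), hc⟩
      have h2 : w e.1.1 e.1.2 ≤ ∑ p ∈ F.filter (fun p => p.1 ∈ C ∧ p.2 ∈ C), w p.1 p.2 :=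
        Finset.single_le_sum (fun p _ => hw0 p.1 p.2) h1
      have h3 := negsum_le w neg hw hw0 hneg F hF1 hF3 C
      have h4 : (0:ℝ) ≤ ∑ u, ∑ v, if u ≠ v ∧ ¬ neg u v ∧ u ∈ C ∧ v ∉ C then w u v else 0 :=
        Finset.sum_nonneg fun u _ => Finset.sum_nonneg fun v _ => by
          split_ifs; exacts [hw0 u v, le_refl 0]
      have h5 := hM C hCp
      rw [hcc] at h5
      calc w e.1.1 e.1.2 ≤ ∑ p ∈ F.filter (fun p => p.1 ∈ C ∧ p.2 ∈ C), w p.1 p.2 := h2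
        _ ≤ (∑ u, ∑ v, if u ≠ v ∧ neg u v ∧ u ∈ C ∧ v ∈ C then w u v else 0) / 2 := h3
        _ ≤ M := by linarith
    rcases hl : label a with C | e
    · -- P is the class of cluster C
      have hCp : C ∈ CC.parts := by
        rcases a with v | e0
        · have : CC.part v = C := by simpa [hlabel] using hl
          exact this ▸ CC.part_mem.2 (mem_univ v)
        · by_cases hc : e0.1.2 ∈ CC.part e0.1.1
          · simp [hlabel, hc] at hl
          · have : CC.part e0.1.1 = C := by simpa [hlabel, hc] using hl
            exact this ▸ CC.part_mem.2 (mem_univ _)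
      have hinl : ∀ v : V, Sum.inl v ∈ P ↔ v ∈ C := by
        intro v
        rw [hPa, hl]; simp only [hlabel]
        constructor
        · intro h
          have : CC.part v = C := (Sum.inl.inj h).symm
          exact this ▸ CC.mem_part (mem_univ v)
        · intro h; exact congrArg Sum.inl (CC.part_eq_of_mem hCp h).symm
      have hinr : ∀ e : {p : V × V // p ∈ F},
          Sum.inr e ∈ P ↔ (e.1.1 ∈ C ∧ e.1.2 ∉ C) := by
        intro e
        rw [hPa, hl]; simp only [hlabel]
        by_cases hc : e.1.2 ∈ CC.part e.1.1
        · rw [if_pos hc]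
          constructor
          · intro h; exact absurd h (Sum.inl_ne_inr)
          · rintro ⟨h1, h2⟩
            exact absurd ((CC.part_eq_of_mem hCp h1) ▸ hc) h2
        · rw [if_neg hc]
          constructor
          · intro h
            have he : CC.part e.1.1 = C := (Sum.inl.inj h).symm
            exact ⟨he ▸ CC.mem_part (mem_univ _), fun h2 => hc (he ▸ h2)⟩
          · rintro ⟨h1, h2⟩
            exact congrArg Sum.inl (CC.part_eq_of_mem hCp h1).symm
      -- compute the cut
      rw [hcut, Fintype.sum_sum_type]
      have T11 : ∀ u : V, (∑ b : RedV V F, if Sum.inl u ∈ P ∧ b ∉ P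
            then redw w neg F (Sum.inl u) b else 0)
          = (∑ v, if u ≠ v ∧ ¬ neg u v ∧ u ∈ C ∧ v ∉ C then w u v else 0)
            + (∑ e : {p : V × V // p ∈ F},
                (if e.1.1 = u ∧ u ∈ C ∧ e.1.2 ∈ C then w e.1.1 e.1.2 else 0)) := by
        intro u
        rw [Fintype.sum_sum_type]
        congr 1
        · apply Finset.sum_congr rfl
          intro v _
          simp only [hinl, redw]
          split_ifs <;> tauto
        · apply Finset.sum_congr rfl
          intro e _
          simp only [hinl, hinr, redw]
          by_cases he : e.1.1 = u
          · subst he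
            by_cases h1 : e.1.1 ∈ C <;> by_cases h2 : e.1.2 ∈ C <;>
              simp [h1, h2]
          · rw [if_neg (fun h : (e.1.1 = u ∧ u ∈ C ∧ e.1.2 ∈ C) => he h.1)]
            split_ifs with hh h2
            · exact absurd h2.symm he
            · rfl
            · rfl
      have T2 : ∀ e : {p : V × V // p ∈ F}, (∑ b : RedV V F, if Sum.inr e ∈ P ∧ b ∉ P
            then redw w neg F (Sum.inr e) b else 0) = 0 := by
        intro e
        rw [Fintype.sum_sum_type]
        have A : (∑ v : V, if Sum.inr e ∈ P ∧ Sum.inl v ∉ P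
            then redw w neg F (Sum.inr e) (Sum.inl v) else 0) = 0 := by
          apply Finset.sum_eq_zero
          intro v _
          by_cases hv : v = e.1.1
          · subst hv
            simp only [hinl, hinr]
            rw [if_neg (by tauto)]
          · have : redw w neg F (Sum.inr e) (Sum.inl v) = 0 := by
              simp [redw, hv]
            rw [this]; simp
        have B : (∑ e' : {p : V × V // p ∈ F}, if Sum.inr e ∈ P ∧ Sum.inr e' ∉ P
            then redw w neg F (Sum.inr e) (Sum.inr e') else 0) = 0 := by
          apply Finset.sum_eq_zero
          intro e' _
          have : redw w neg F (Sum.inr e) (Sum.inr e') = 0 := by simp only [redw]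
          rw [this]; simp
        rw [A, B, add_zero]
      rw [Finset.sum_congr rfl (fun u _ => T11 u),
          Finset.sum_congr rfl (fun e _ => T2 e), Finset.sum_const_zero, add_zero,
          Finset.sum_add_distrib]
      have S1 : (∑ u : V, ∑ e : {p : V × V // p ∈ F},
            (if e.1.1 = u ∧ u ∈ C ∧ e.1.2 ∈ C then w e.1.1 e.1.2 else 0))
          = ∑ p ∈ F.filter (fun p => p.1 ∈ C ∧ p.2 ∈ C), w p.1 p.2 := by
        rw [Finset.sum_comm]
        have step : ∀ e : {p : V × V // p ∈ F},
            (∑ u : V, if e.1.1 = u ∧ u ∈ C ∧ e.1.2 ∈ C then w e.1.1 e.1.2 else 0)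
            = if e.1.1 ∈ C ∧ e.1.2 ∈ C then w e.1.1 e.1.2 else 0 := by
          intro e
          have : ∀ u : V, (if e.1.1 = u ∧ u ∈ C ∧ e.1.2 ∈ C then w e.1.1 e.1.2 else 0)
              = if e.1.1 = u then (if e.1.1 ∈ C ∧ e.1.2 ∈ C then w e.1.1 e.1.2 else 0)
                else 0 := by
            intro u
            by_cases he : e.1.1 = u
            · subst he; simp
            · rw [if_neg (fun h => he h.1), if_neg he]
          rw [Finset.sum_congr rfl (fun u _ => this u), Finset.sum_ite_eq]
          simp
        rw [Finset.sum_congr rfl (fun e _ => step e), Finset.sum_filter]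
        exact Finset.sum_coe_sort F (fun p => if p.1 ∈ C ∧ p.2 ∈ C then w p.1 p.2 else 0)
      rw [S1]
      have h3 := negsum_le w neg hw hw0 hneg F hF1 hF3 C
      have h5 := hM C hCp
      rw [hcc] at h5
      linarith
    · -- P = {Sum.inr e}
      have hcond : e.1.2 ∈ CC.part e.1.1 ∧ a = Sum.inr e := by
        rcases a with v | e0
        · simp [hlabel] at hl
        · by_cases hc : e0.1.2 ∈ CC.part e0.1.1
          · have : e0 = e := by simpa [hlabel, hc] using hl
            subst this; exact ⟨hc, rfl⟩
          · simp [hlabel, hc] at hl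
      have hPe : ∀ b, b ∈ P ↔ b = Sum.inr e := by
        intro b
        rw [hPa, hcond.2]
        simp only [hlabel]
        rw [if_pos hcond.1]
        constructor
        · intro h
          rcases b with v | e'
          · simp [hlabel] at h
          · by_cases hc : e'.1.2 ∈ CC.part e'.1.1
            · simp only [hlabel, if_pos hc] at h
              exact congrArg Sum.inr (Sum.inr.inj h.symm)
            · simp [hlabel, hc] at h
        · rintro rfl
          simp only [hlabel, if_pos hcond.1]
      rw [hcut, Fintype.sum_sum_type]
      have A : ∀ u : V, (∑ b : RedV V F, if Sum.inl u ∈ P ∧ b ∉ P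
          then redw w neg F (Sum.inl u) b else 0) = 0 := by
        intro u
        apply Finset.sum_eq_zero
        intro b _
        rw [if_neg]
        rintro ⟨h, -⟩
        rw [hPe] at h
        exact Sum.inl_ne_inr h
      rw [Finset.sum_congr rfl (fun u _ => A u), Finset.sum_const_zero, zero_add]
      have B : (∑ e' : {p : V × V // p ∈ F}, ∑ b : RedV V F,
          if Sum.inr e' ∈ P ∧ b ∉ P then redw w neg F (Sum.inr e') b else 0)
          = w e.1.1 e.1.2 := by
        rw [Finset.sum_eq_single_of_mem e (mem_univ e)]
        · rw [Fintype.sum_sum_type]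
          have B1 : (∑ v : V, if Sum.inr e ∈ P ∧ Sum.inl v ∉ P
              then redw w neg F (Sum.inr e) (Sum.inl v) else 0) = w e.1.1 e.1.2 := by
            have : ∀ v : V, (if Sum.inr e ∈ P ∧ Sum.inl v ∉ P
                then redw w neg F (Sum.inr e) (Sum.inl v) else 0)
                = if v = e.1.1 then w e.1.1 e.1.2 else 0 := by
              intro v
              rw [if_pos ⟨(hPe _).2 rfl, by rw [hPe]; exact Sum.inl_ne_inr⟩]
              simp only [redw]
              congr!
            rw [Finset.sum_congr rfl (fun v _ => this v), Finset.sum_ite_eq']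
            simp
          have B2 : (∑ e'' : {p : V × V // p ∈ F}, if Sum.inr e ∈ P ∧ Sum.inr e'' ∉ P
              then redw w neg F (Sum.inr e) (Sum.inr e'') else 0) = 0 := by
            apply Finset.sum_eq_zero
            intro e'' _
            have : redw w neg F (Sum.inr e) (Sum.inr e'') = 0 := by simp only [redw]
            rw [this]; simp
          rw [B1, B2, add_zero]
        · intro e' _ hne
          apply Finset.sum_eq_zero
          intro b _
          rw [if_neg]
          rintro ⟨h, -⟩
          rw [hPe] at h
          exact hne (Sum.inr.inj h)
      rw [B]
      exact wle e hcond.1
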